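/- Let p ≥ 0 be an integer, h > 0, and x_i ∈ ℝ. Suppose u^R : ℝ → ℝ coincides with a polynomial of degree at most p on (x_i − h/2, x_i) and with a (possibly different) polynomial of degree at most p on (x_i, x_i + h/2). Let J^k = (d^k/dx^k)u^R(x_i⁺) − (d^k/dx^k)u^R(x_i⁻) for 0 ≤ k ≤ p, and D^k = J^k / h^{p+1−k}. Then min over polynomials v of degree at most p of ∫_{x_i − h/2}^{x_i + h/2} (v(x) − u^R(x))² dx equals h^{2p+3} · Q(D^0, D^1, …, D^p). -/

import Mathlib

open MeasureTheory Polynomial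
open scoped Pointwise

/-- `fd p d ξ = (1/2) Σ_{k=0}^p (d_k/k!) ξ^k`. -/
noncomputable def fd (p : ℕ) (d : Fin (p+1) → ℝ) (ξ : ℝ) : ℝ :=
  (1/2) * ∑ k : Fin (p+1), d k / (Nat.factorial k) * ξ ^ (k : ℕ)

/-- The error functional whose infimum over polynomials of degree ≤ p defines `Qform`. -/
noncomputable def Qerr (p : ℕ) (d : Fin (p+1) → ℝ) (v : Polynomial ℝ) : ℝ :=
  (∫ ξ in (-(1:ℝ)/2)..0, (v.eval ξ + fd p d ξ)^2) +
  (∫ ξ in (0:ℝ)..(1/2), (v.eval ξ - fd p d ξ)^2)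

/-- `Q(d) = inf_{v ∈ P} Qerr p d v`. -/
noncomputable def Qform (p : ℕ) (d : Fin (p+1) → ℝ) : ℝ :=
  sInf {q : ℝ | ∃ v : Polynomial ℝ, v.natDegree ≤ p ∧ q = Qerr p d v}

lemma taylor_sum_fin (p : ℕ) (q : Polynomial ℝ) (hq : q.natDegree ≤ p) (r t : ℝ) :
    q.eval (r + t) = ∑ k : Fin (p+1), (derivative^[(k:ℕ)] q).eval r / (Nat.factorial k) * t ^ (k:ℕ) := by
  have h1 : q.eval (r + t) = (taylor r q).eval t := by rw [taylor_eval, add_comm]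
  rw [h1, eval_eq_sum_range' (n := p+1) (by rw [natDegree_taylor]; omega) t,
    ← Fin.sum_univ_eq_sum_range]
  refine Finset.sum_congr rfl fun k _ => ?_
  congr 1
  rw [taylor_coeff]
  have h2 : ((k:ℕ).factorial • hasseDeriv (k:ℕ) q) = derivative^[(k:ℕ)] q :=
    congrFun (factorial_smul_hasseDeriv (R := ℝ) (k := (k:ℕ))) q
  rw [← h2]
  have hf : ((k:ℕ).factorial : ℝ) ≠ 0 := Nat.cast_ne_zero.mpr (Nat.factorial_ne_zero _)
  rw [eval_smul, nsmul_eq_mul]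
  field_simp

lemma ae_eq_piece {a b : ℝ} (hab : a ≤ b) {f g : ℝ → ℝ} (hfg : ∀ x ∈ Set.Ioo a b, f x = g x) :
    ∀ᵐ x : ℝ, x ∈ Set.uIoc a b → f x = g x := by
  have hb : (volume : Measure ℝ) {b} = 0 := measure_singleton b
  filter_upwards [measure_eq_zero_iff_ae_notMem.mp hb] with x hx hmem
  rw [Set.uIoc_of_le hab] at hmem
  exact hfg x ⟨hmem.1, lt_of_le_of_ne hmem.2 (by simpa using hx)⟩

lemma ii_piece {a b : ℝ} (hab : a ≤ b)
    {u : ℝ → ℝ} {q : Polynomial ℝ} (v : Polynomial ℝ) (hfg : ∀ x ∈ Set.Ioo a b, u x = q.eval x) :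
    IntervalIntegrable (fun x => (v.eval x - u x)^2) volume a b := by
  have hg : IntervalIntegrable (fun x => (v.eval x - q.eval x)^2) volume a b :=
    Continuous.intervalIntegrable ((v.continuous.sub q.continuous).pow 2) a b
  have hae := ae_eq_piece hab (f := fun x => (v.eval x - u x)^2)
    (g := fun x => (v.eval x - q.eval x)^2) (fun x hx => by simp only [hfg x hx])
  constructor
  · refine hg.1.congr_fun_ae ?_
    rw [Set.uIoc_of_le hab] at hae
    refine (ae_restrict_iff' measurableSet_Ioc).mpr ?_
    filter_upwards [hae] with x hx hmem
    exact (hx hmem).symm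
  · have : Set.Ioc b a = ∅ := Set.Ioc_eq_empty (by exact not_lt.mpr hab)
    rw [this]; exact integrableOn_empty

lemma core (p : ℕ) (h xi : ℝ) (hh : 0 < h) (uR : ℝ → ℝ) (ql qr : Polynomial ℝ)
    (hL : ∀ x ∈ Set.Ioo (xi - h/2) xi, uR x = ql.eval x)
    (hR : ∀ x ∈ Set.Ioo xi (xi + h/2), uR x = qr.eval x)
    (d : Fin (p+1) → ℝ) (v w : Polynomial ℝ)
    (hA : ∀ ξ : ℝ, v.eval (xi + h*ξ) - ql.eval (xi + h*ξ) = h^(p+1) * (w.eval ξ + fd p d ξ))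
    (hB : ∀ ξ : ℝ, v.eval (xi + h*ξ) - qr.eval (xi + h*ξ) = h^(p+1) * (w.eval ξ - fd p d ξ)) :
    (∫ x in (xi - h/2)..(xi + h/2), (v.eval x - uR x)^2) = h^(2*p+3) * Qerr p d w := by
  have hne : h ≠ 0 := ne_of_gt hh
  have hab1 : xi - h/2 ≤ xi := by linarith
  have hab2 : xi ≤ xi + h/2 := by linarith
  have hsplit := intervalIntegral.integral_add_adjacent_intervals
    (ii_piece hab1 v hL) (ii_piece hab2 v hR)
  rw [← hsplit]
  have e1 : (∫ x in (xi - h/2)..xi, (v.eval x - uR x)^2)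
      = ∫ x in (xi - h/2)..xi, (v.eval x - ql.eval x)^2 :=
    intervalIntegral.integral_congr_ae (ae_eq_piece hab1 (fun x hx => by rw [hL x hx]))
  have e2 : (∫ x in xi..(xi + h/2), (v.eval x - uR x)^2)
      = ∫ x in xi..(xi + h/2), (v.eval x - qr.eval x)^2 :=
    intervalIntegral.integral_congr_ae (ae_eq_piece hab2 (fun x hx => by rw [hR x hx]))
  rw [e1, e2]
  have c1 := intervalIntegral.integral_comp_mul_add (a := -(1:ℝ)/2) (b := 0)
    (f := fun x => (v.eval x - ql.eval x)^2) (c := h) hne xi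
  have c2 := intervalIntegral.integral_comp_mul_add (a := (0:ℝ)) (b := 1/2)
    (f := fun x => (v.eval x - qr.eval x)^2) (c := h) hne xi
  rw [show h * (-(1:ℝ)/2) + xi = xi - h/2 by ring, show h * (0:ℝ) + xi = xi by ring] at c1
  rw [show h * ((1:ℝ)/2) + xi = xi + h/2 by ring, show h * (0:ℝ) + xi = xi by ring] at c2
  have g1 : (fun ξ : ℝ => (v.eval (h*ξ + xi) - ql.eval (h*ξ + xi))^2)
      = fun ξ : ℝ => (h^(p+1))^2 * ((w.eval ξ + fd p d ξ)^2) := by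
    funext ξ; rw [show h*ξ + xi = xi + h*ξ by ring, ← mul_pow, ← hA ξ]
  have g2 : (fun ξ : ℝ => (v.eval (h*ξ + xi) - qr.eval (h*ξ + xi))^2)
      = fun ξ : ℝ => (h^(p+1))^2 * ((w.eval ξ - fd p d ξ)^2) := by
    funext ξ; rw [show h*ξ + xi = xi + h*ξ by ring, ← mul_pow, ← hB ξ]
  rw [g1] at c1; rw [g2] at c2
  rw [intervalIntegral.integral_const_mul] at c1 c2
  have l1 : (∫ x in (xi - h/2)..xi, (v.eval x - ql.eval x)^2)
      = h * (h^(p+1))^2 * ∫ ξ in (-(1:ℝ)/2)..0, (w.eval ξ + fd p d ξ)^2 := by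
    have := congrArg (fun t => h * t) c1
    simp only [smul_eq_mul, ← mul_assoc, mul_inv_cancel₀ hne, one_mul] at this
    exact this.symm
  have l2 : (∫ x in xi..(xi + h/2), (v.eval x - qr.eval x)^2)
      = h * (h^(p+1))^2 * ∫ ξ in (0:ℝ)..(1/2), (w.eval ξ - fd p d ξ)^2 := by
    have := congrArg (fun t => h * t) c2
    simp only [smul_eq_mul, ← mul_assoc, mul_inv_cancel₀ hne, one_mul] at this
    exact this.symm
  rw [l1, l2, Qerr]
  have : h^(2*p+3) = h * (h^(p+1))^2 := by rw [← pow_mul, ← pow_succ']; congr 1; omega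
  rw [this]; ring

lemma jlem (p : ℕ) (h xi : ℝ) (hh : 0 < h) (ql qr : Polynomial ℝ)
    (hql : ql.natDegree ≤ p) (hqr : qr.natDegree ≤ p) (ξ : ℝ) :
    (qr - ql).eval (xi + h*ξ) = 2 * h^(p+1) * fd p (fun k =>
      ((derivative^[(k:ℕ)] qr).eval xi - (derivative^[(k:ℕ)] ql).eval xi) / h^(p+1-(k:ℕ))) ξ := by
  have hne : h ≠ 0 := ne_of_gt hh
  rw [taylor_sum_fin p (qr - ql) (le_trans (natDegree_sub_le _ _) (max_le hqr hql)) xi (h*ξ), fd,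
    ← mul_assoc, Finset.mul_sum]
  refine Finset.sum_congr rfl fun k _ => ?_
  simp only [Polynomial.iterate_derivative_sub, eval_sub]
  have hpow : h^(p+1) = h^(p+1-(k:ℕ)) * h^(k:ℕ) := by
    rw [← pow_add]; congr 1; omega
  have hne2 : h^(p+1-(k:ℕ)) ≠ 0 := pow_ne_zero _ hne
  rw [mul_pow, hpow]
  field_simp

lemma hAB (p : ℕ) (h xi : ℝ) (hh : 0 < h) (ql qr : Polynomial ℝ)
    (hql : ql.natDegree ≤ p) (hqr : qr.natDegree ≤ p) (d : Fin (p+1) → ℝ)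
    (hjd : ∀ ξ : ℝ, (qr - ql).eval (xi + h*ξ) = 2 * h^(p+1) * fd p d ξ)
    (v w : Polynomial ℝ)
    (hvw : ∀ ξ : ℝ, v.eval (xi + h*ξ)
      = (Polynomial.C (1/2:ℝ) * (ql + qr)).eval (xi + h*ξ) + h^(p+1) * w.eval ξ) :
    (∀ ξ : ℝ, v.eval (xi + h*ξ) - ql.eval (xi + h*ξ) = h^(p+1) * (w.eval ξ + fd p d ξ)) ∧
    (∀ ξ : ℝ, v.eval (xi + h*ξ) - qr.eval (xi + h*ξ) = h^(p+1) * (w.eval ξ - fd p d ξ)) := by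
  constructor <;> intro ξ
  · have hj := hjd ξ
    have hv := hvw ξ
    simp only [eval_mul, eval_C, eval_add, eval_sub] at hj hv ⊢
    linear_combination hv + (1/2 : ℝ) * hj
  · have hj := hjd ξ
    have hv := hvw ξ
    simp only [eval_mul, eval_C, eval_add, eval_sub] at hj hv ⊢
    linear_combination hv - (1/2 : ℝ) * hj

theorem cell_min_eq_scaled_Qform (p : ℕ) (h xi : ℝ) (hh : 0 < h)
    (uR : ℝ → ℝ) (ql qr : Polynomial ℝ)
    (hql : ql.natDegree ≤ p) (hqr : qr.natDegree ≤ p)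
    (hL : ∀ x ∈ Set.Ioo (xi - h/2) xi, uR x = ql.eval x)
    (hR : ∀ x ∈ Set.Ioo xi (xi + h/2), uR x = qr.eval x) :
    sInf {q : ℝ | ∃ v : Polynomial ℝ, v.natDegree ≤ p ∧
        q = ∫ x in (xi - h/2)..(xi + h/2), (v.eval x - uR x)^2} =
      h^(2*p+3) * Qform p (fun k =>
        ((Polynomial.derivative^[(k:ℕ)] qr).eval xi -
         (Polynomial.derivative^[(k:ℕ)] ql).eval xi) / h^(p+1-(k:ℕ))) := by
  have hne : h ≠ 0 := ne_of_gt hh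
  set d : Fin (p+1) → ℝ := fun k =>
    ((Polynomial.derivative^[(k:ℕ)] qr).eval xi -
     (Polynomial.derivative^[(k:ℕ)] ql).eval xi) / h^(p+1-(k:ℕ)) with hd
  set m : Polynomial ℝ := Polynomial.C (1/2:ℝ) * (ql + qr) with hmdef
  have hm : m.natDegree ≤ p :=
    le_trans (natDegree_C_mul_le _ _) (le_trans (natDegree_add_le _ _) (max_le hql hqr))
  have hset : {q : ℝ | ∃ v : Polynomial ℝ, v.natDegree ≤ p ∧
        q = ∫ x in (xi - h/2)..(xi + h/2), (v.eval x - uR x)^2}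
      = (h^(2*p+3)) • {q : ℝ | ∃ v : Polynomial ℝ, v.natDegree ≤ p ∧ q = Qerr p d v} := by
    ext q
    simp only [Set.mem_smul_set, Set.mem_setOf_eq, smul_eq_mul]
    constructor
    · rintro ⟨v, hv, rfl⟩
      set w : Polynomial ℝ := Polynomial.C ((h^(p+1))⁻¹) *
        ((v - m).comp (Polynomial.C xi + Polynomial.C h * Polynomial.X)) with hwdef
      have hwdeg : w.natDegree ≤ p := by
        refine le_trans (natDegree_C_mul_le _ _) (le_trans natDegree_comp_le ?_)
        have h1 : (v - m).natDegree ≤ p := le_trans (natDegree_sub_le _ _) (max_le hv hm)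
        have h2 : (Polynomial.C xi + Polynomial.C h * Polynomial.X : Polynomial ℝ).natDegree ≤ 1 := by
          refine le_trans (natDegree_add_le _ _) (max_le (by simp) ?_)
          exact le_trans (natDegree_C_mul_le _ _) (by simp)
        calc (v - m).natDegree * (Polynomial.C xi + Polynomial.C h * Polynomial.X : Polynomial ℝ).natDegree
            ≤ p * 1 := Nat.mul_le_mul h1 h2
          _ = p := by omega
      have hvw : ∀ ξ : ℝ, v.eval (xi + h*ξ) = m.eval (xi + h*ξ) + h^(p+1) * w.eval ξ := by
        intro ξ
        have hp : (h:ℝ)^(p+1) ≠ 0 := pow_ne_zero _ hne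
        simp only [hwdef, eval_mul, eval_C, eval_comp, eval_add, eval_X, eval_sub]
        field_simp
        ring
      obtain ⟨hA, hB⟩ := hAB p h xi hh ql qr hql hqr d (fun ξ => jlem p h xi hh ql qr hql hqr ξ) v w hvw
      exact ⟨Qerr p d w, ⟨w, hwdeg, rfl⟩,
        (core p h xi hh uR ql qr hL hR d v w hA hB).symm⟩
    · rintro ⟨q', ⟨w, hw, rfl⟩, rfl⟩
      set v : Polynomial ℝ := m + Polynomial.C (h^(p+1)) *
        (w.comp (Polynomial.C h⁻¹ * (Polynomial.X - Polynomial.C xi))) with hvdef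
      have hvdeg : v.natDegree ≤ p := by
        refine le_trans (natDegree_add_le _ _) (max_le hm ?_)
        refine le_trans (natDegree_C_mul_le _ _) (le_trans natDegree_comp_le ?_)
        have h2 : (Polynomial.C h⁻¹ * (Polynomial.X - Polynomial.C xi) : Polynomial ℝ).natDegree ≤ 1 := by
          refine le_trans (natDegree_C_mul_le _ _) ?_
          exact le_trans (natDegree_sub_le _ _) (by simp)
        calc w.natDegree * (Polynomial.C h⁻¹ * (Polynomial.X - Polynomial.C xi) : Polynomial ℝ).natDegree
            ≤ p * 1 := Nat.mul_le_mul hw h2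
          _ = p := by omega
      have hvw : ∀ ξ : ℝ, v.eval (xi + h*ξ) = m.eval (xi + h*ξ) + h^(p+1) * w.eval ξ := by
        intro ξ
        simp only [hvdef, eval_add, eval_mul, eval_C, eval_comp, eval_sub, eval_X]
        rw [show h⁻¹ * (xi + h*ξ - xi) = ξ by field_simp; ring]
      obtain ⟨hA, hB⟩ := hAB p h xi hh ql qr hql hqr d (fun ξ => jlem p h xi hh ql qr hql hqr ξ) v w hvw
      exact ⟨v, hvdeg, (core p h xi hh uR ql qr hL hR d v w hA hB).symm⟩
  rw [hset, Real.sInf_smul_of_nonneg (by positivity), smul_eq_mul, Qform]
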